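/- For p ≥ 0 and n ≥ p + 6, the balanced bipartite graph N_{n,n}^{p,1} is not 2p-Hamilton-biconnected: after deleting p vertices of maximum degree from each side so as to leave the graph N_{n−p,n−p}^{0,1}, there exist a vertex x in one part and y in the other part, both of full degree n − p, such that there is no Hamiltonian path between x and y. -/

import Mathlib

/-- Bipartite graph on `α ⊕ β` determined by a cross relation. -/
def crossGraph {α β : Type*} (r : α → β → Prop) : SimpleGraph (α ⊕ β) where
  Adj u v := match u, v with
    | Sum.inl i, Sum.inr j => r i j
    | Sum.inr j, Sum.inl i => r i j
    | _, _ => False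
  symm := ⟨by rintro (i|i) (j|j) h <;> first | exact h.elim | exact h⟩
  loopless := ⟨by rintro (i|i) h <;> exact h⟩

/-- Block class of an index: `1` for the first `a` indices, `2` for the next `b`, else `3`. -/
def nClass (a b : ℕ) (i : ℕ) : ℕ := if i < a then 1 else if i < a + b then 2 else 3

/-- The graph `N_{n,n}^{p,1}`: blocks of sizes `n-p-2`, `p+1`, `1` on each side; a cross pair
is adjacent unless its classes are `{1,3}`. -/
def Ngraph1 (n p : ℕ) : SimpleGraph (Fin n ⊕ Fin n) :=
  crossGraph (fun i j =>
    ¬(nClass (n-p-2) (p+1) (i:ℕ) = 1 ∧ nClass (n-p-2) (p+1) (j:ℕ) = 3) ∧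
    ¬(nClass (n-p-2) (p+1) (i:ℕ) = 3 ∧ nClass (n-p-2) (p+1) (j:ℕ) = 1))

/-- A balanced bipartite graph `G` with parts `X, Y` is `2p`-Hamilton-biconnected:
for every `W` meeting each part in `p` vertices, the subgraph induced on the complement of
`W` has a Hamiltonian path between any vertex of `X \ W` and any vertex of `Y \ W`. -/
def TwoPHamBic {V : Type*} [DecidableEq V] (G : SimpleGraph V) (X Y : Finset V) (p : ℕ) :
    Prop :=
  ∀ W : Finset V, (W ∩ X).card = p → (W ∩ Y).card = p →
    ∀ x ∈ X, ∀ y ∈ Y, ∀ (hx : x ∉ W) (hy : y ∉ W),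
      ∃ w : (G.induce {v : V | v ∉ W}).Walk ⟨x, hx⟩ ⟨y, hy⟩, w.IsHamiltonian

open SimpleGraph in
lemma stmt14_key {V : Type*} [DecidableEq V] {G : SimpleGraph V} {x y u v z : V}
    (hux : u ≠ x) (huy : u ≠ y) (hvx : v ≠ x) (hvy : v ≠ y)
    (hzx : z ≠ x) (hzy : z ≠ y) (hzu : z ≠ u) (hzv : z ≠ v)
    (hu : ∀ c, G.Adj u c → c = y ∨ c = v) (hv : ∀ c, G.Adj v c → c = x ∨ c = u)
    (w : G.Walk x y) (hw : w.IsHamiltonian) : False := by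
  classical
  have hp : w.IsPath := hw.isPath
  have hum : u ∈ w.support := hw.mem_support u
  set t := w.takeUntil u hum with ht
  set q := w.dropUntil u hum with hqdef
  have hspec : t.append q = w := w.take_spec hum
  have hqp : q.IsPath := hp.dropUntil hum
  have htp : t.IsPath := hp.takeUntil hum
  obtain ⟨c, hadj, q', hq'⟩ := Walk.exists_eq_cons_of_ne huy q
  rw [hq'] at hqp
  rcases hu c hadj with hc | hc <;> subst c
  · -- q = cons (u,y) q', q' : Walk y y
    rw [Walk.cons_isPath_iff] at hqp
    have hnil : q' = Walk.nil := Walk.isPath_iff_eq_nil.1 hqp.1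
    have hqs : q.support = [u, y] := by rw [hq', hnil]; simp
    obtain ⟨c', hadj', r', hr'⟩ := Walk.exists_eq_cons_of_ne hux t.reverse
    have htrp : t.reverse.IsPath := htp.reverse
    rw [hr', Walk.cons_isPath_iff] at htrp
    rcases hu c' hadj' with hc' | hc' <;> subst c'
    · -- y ∈ t.support : contradiction with count
      have hyt : y ∈ t.support := by
        have h1 : y ∈ t.reverse.support := by
          rw [hr']; simp
        rwa [Walk.support_reverse, List.mem_reverse] at h1
      have h1 := hw y
      rw [← hspec, Walk.support_append, List.count_append] at h1
      have h2 : 0 < t.support.count y := List.count_pos_iff.2 hyt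
      have h3 : 0 < (q.support.tail).count y := by
        rw [hqs]; simp
      omega
    · -- c' = v
      obtain ⟨c'', hadj'', r'', hr''⟩ := Walk.exists_eq_cons_of_ne hvx r'
      rw [hr''] at htrp
      rcases hv c'' hadj'' with hc'' | hc'' <;> subst c''
      · -- r'' : Walk x x
        rw [Walk.cons_isPath_iff] at htrp
        have hnil2 : r'' = Walk.nil := Walk.isPath_iff_eq_nil.1 htrp.1.1
        have hts : t.support = [x, v, u] := by
          have h1 : t.reverse.support = [u, v, x] := by
            rw [hr', hr'', hnil2]; simp
          have h2 := congrArg List.reverse h1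
          rw [Walk.support_reverse, List.reverse_reverse] at h2
          simpa using h2
        have hz := hw.mem_support z
        rw [← hspec, Walk.support_append, hts, hqs] at hz
        simp [hzx, hzy, hzu, hzv] at hz
      · -- u ∈ r'.support
        exact htrp.2 (by simp)
  · -- c = v
    rw [Walk.cons_isPath_iff] at hqp
    obtain ⟨c'', hadj'', q'', hq''⟩ := Walk.exists_eq_cons_of_ne hvy q'
    rcases hv c'' hadj'' with hc'' | hc'' <;> subst c''
    · -- x ∈ q'.support
      have hx1 : x ∈ q'.support := by rw [hq'']; simp
      have h1 := hw x
      rw [← hspec, Walk.support_append, List.count_append] at h1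
      have h2 : 0 < t.support.count x := List.count_pos_iff.2 t.start_mem_support
      have h3 : 0 < (q.support.tail).count x := by
        rw [hq']
        simpa using List.count_pos_iff.2 hx1
      omega
    · exact hqp.2 (by rw [hq'']; simp)

lemma Ngraph1_adj_lr (n p : ℕ) (i j : Fin n) :
    (Ngraph1 n p).Adj (Sum.inl i) (Sum.inr j) ↔
      (¬(nClass (n-p-2) (p+1) (i:ℕ) = 1 ∧ nClass (n-p-2) (p+1) (j:ℕ) = 3) ∧
       ¬(nClass (n-p-2) (p+1) (i:ℕ) = 3 ∧ nClass (n-p-2) (p+1) (j:ℕ) = 1)) := Iff.rfl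

lemma Ngraph1_not_adj_ll (n p : ℕ) (i j : Fin n) :
    ¬ (Ngraph1 n p).Adj (Sum.inl i) (Sum.inl j) := fun h => h

lemma Ngraph1_not_adj_rr (n p : ℕ) (i j : Fin n) :
    ¬ (Ngraph1 n p).Adj (Sum.inr i) (Sum.inr j) := fun h => h

set_option maxHeartbeats 1000000 in
theorem stmt14 (n p : ℕ) (hn : p + 6 ≤ n) :
    ¬ TwoPHamBic (Ngraph1 n p)
        (Finset.univ.image Sum.inl) (Finset.univ.image Sum.inr) p ∧
    ∃ W : Finset (Fin n ⊕ Fin n),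
      (W ∩ Finset.univ.image Sum.inl).card = p ∧
      (W ∩ Finset.univ.image Sum.inr).card = p ∧
      ∃ x y : Fin n, ∃ (hx : Sum.inl x ∉ W) (hy : Sum.inr y ∉ W),
        (∀ j : Fin n, Sum.inr j ∉ W → (Ngraph1 n p).Adj (Sum.inl x) (Sum.inr j)) ∧
        (∀ i : Fin n, Sum.inl i ∉ W → (Ngraph1 n p).Adj (Sum.inl i) (Sum.inr y)) ∧
        ¬ ∃ w : ((Ngraph1 n p).induce {v | v ∉ W}).Walk ⟨Sum.inl x, hx⟩ ⟨Sum.inr y, hy⟩,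
            w.IsHamiltonian := by
  classical
  have hab : n - p - 2 + (p + 1) = n - 1 := by omega
  set S : Finset (Fin n) :=
    Finset.univ.filter (fun i : Fin n => n - p - 2 ≤ (i:ℕ) ∧ (i:ℕ) < n - 2) with hS
  set W : Finset (Fin n ⊕ Fin n) := S.image Sum.inl ∪ S.image Sum.inr with hW
  have hmemWl : ∀ i : Fin n, Sum.inl i ∈ W ↔ (n - p - 2 ≤ (i:ℕ) ∧ (i:ℕ) < n - 2) := by
    intro i; simp [hW, hS]
  have hmemWr : ∀ i : Fin n, Sum.inr i ∈ W ↔ (n - p - 2 ≤ (i:ℕ) ∧ (i:ℕ) < n - 2) := by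
    intro i; simp [hW, hS]
  have hScard : S.card = p := by
    have h1 : S.image Fin.val = Finset.Ico (n - p - 2) (n - 2) := by
      ext j
      simp only [hS, Finset.mem_image, Finset.mem_filter, Finset.mem_univ, true_and,
        Finset.mem_Ico]
      constructor
      · rintro ⟨i, hi, rfl⟩; exact hi
      · rintro ⟨h1, h2⟩; exact ⟨⟨j, by omega⟩, ⟨h1, h2⟩, rfl⟩
    have h2 := congrArg Finset.card h1
    rw [Finset.card_image_of_injective _ Fin.val_injective, Nat.card_Ico] at h2
    omega
  have hcard1 : (W ∩ Finset.univ.image Sum.inl).card = p := by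
    have h1 : W ∩ Finset.univ.image Sum.inl = S.image Sum.inl := by
      ext s; rcases s with i | i <;> simp [hW]
    rw [h1, Finset.card_image_of_injective _ Sum.inl_injective, hScard]
  have hcard2 : (W ∩ Finset.univ.image Sum.inr).card = p := by
    have h1 : W ∩ Finset.univ.image Sum.inr = S.image Sum.inr := by
      ext s; rcases s with i | i <;> simp [hW]
    rw [h1, Finset.card_image_of_injective _ Sum.inr_injective, hScard]
  -- the distinguished vertices
  obtain ⟨x, hxval⟩ : ∃ x : Fin n, (x : ℕ) = n - 2 := ⟨⟨n - 2, by omega⟩, rfl⟩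
  obtain ⟨uI, huIval⟩ : ∃ u : Fin n, (u : ℕ) = n - 1 := ⟨⟨n - 1, by omega⟩, rfl⟩
  obtain ⟨z0, hz0val⟩ : ∃ z : Fin n, (z : ℕ) = 0 := ⟨⟨0, by omega⟩, rfl⟩
  have hxW : Sum.inl x ∉ W := by rw [hmemWl, hxval]; omega
  have hyW : Sum.inr x ∉ W := by rw [hmemWr, hxval]; omega
  have huW : Sum.inl uI ∉ W := by rw [hmemWl, huIval]; omega
  have hvW : Sum.inr uI ∉ W := by rw [hmemWr, huIval]; omega
  have hzW : Sum.inl z0 ∉ W := by rw [hmemWl, hz0val]; omega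
  -- full degree
  have hfull1 : ∀ j : Fin n, (Ngraph1 n p).Adj (Sum.inl x) (Sum.inr j) := by
    intro j
    rw [Ngraph1_adj_lr]
    unfold nClass
    rw [hxval]
    split_ifs <;> omega
  have hfull2 : ∀ i : Fin n, (Ngraph1 n p).Adj (Sum.inl i) (Sum.inr x) := by
    intro i
    rw [Ngraph1_adj_lr]
    unfold nClass
    rw [hxval]
    split_ifs <;> omega
  -- the induced graph and its distinguished vertices
  set Gp := (Ngraph1 n p).induce {v : Fin n ⊕ Fin n | v ∉ W} with hGp
  have hindAdj : ∀ s t : {v : Fin n ⊕ Fin n | v ∉ W},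
      Gp.Adj s t ↔ (Ngraph1 n p).Adj s.1 t.1 := fun s t => Iff.rfl
  -- no Hamiltonian path
  have hnoham : ¬ ∃ w : Gp.Walk ⟨Sum.inl x, hxW⟩ ⟨Sum.inr x, hyW⟩, w.IsHamiltonian := by
    rintro ⟨w, hw⟩
    have hU : Sum.inl uI ∈ {v : Fin n ⊕ Fin n | v ∉ W} := huW
    have hV : Sum.inr uI ∈ {v : Fin n ⊕ Fin n | v ∉ W} := hvW
    have hZ : Sum.inl z0 ∈ {v : Fin n ⊕ Fin n | v ∉ W} := hzW
    refine stmt14_key (u := ⟨Sum.inl uI, hU⟩) (v := ⟨Sum.inr uI, hV⟩) (z := ⟨Sum.inl z0, hZ⟩)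
      ?_ ?_ ?_ ?_ ?_ ?_ ?_ ?_ ?_ ?_ w hw
    · simp only [ne_eq, Subtype.mk.injEq, Sum.inl.injEq]
      intro h
      have := congrArg Fin.val h
      rw [huIval, hxval] at this; omega
    · simp
    · simp
    · simp only [ne_eq, Subtype.mk.injEq, Sum.inr.injEq]
      intro h
      have := congrArg Fin.val h
      rw [huIval, hxval] at this; omega
    · simp only [ne_eq, Subtype.mk.injEq, Sum.inl.injEq]
      intro h
      have := congrArg Fin.val h
      rw [hz0val, hxval] at this; omega
    · simp
    · simp only [ne_eq, Subtype.mk.injEq, Sum.inl.injEq]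
      intro h
      have := congrArg Fin.val h
      rw [hz0val, huIval] at this; omega
    · simp
    · -- neighbors of u
      rintro ⟨(i | j), hs⟩ hadj
      · exact absurd ((hindAdj _ _).1 hadj) (Ngraph1_not_adj_ll n p uI i)
      · have hj := (Ngraph1_adj_lr n p uI j).1 ((hindAdj _ _).1 hadj)
        have hjW : ¬ (n - p - 2 ≤ (j:ℕ) ∧ (j:ℕ) < n - 2) := fun h => hs ((hmemWr j).2 h)
        have hjn := j.isLt
        have hj2 : (j:ℕ) = n - 2 ∨ (j:ℕ) = n - 1 := by
          obtain ⟨h1, h2⟩ := hj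
          unfold nClass at h1 h2
          rw [huIval] at h1 h2
          split_ifs at h1 h2 <;> omega
        rcases hj2 with h | h
        · left; exact Subtype.ext (congrArg Sum.inr (Fin.ext (by rw [h, hxval])))
        · right; exact Subtype.ext (congrArg Sum.inr (Fin.ext (by rw [h, huIval])))
    · -- neighbors of v
      rintro ⟨(i | j), hs⟩ hadj
      · have hi := (Ngraph1_adj_lr n p i uI).1 ((hindAdj _ _).1 hadj).symm
        have hiW : ¬ (n - p - 2 ≤ (i:ℕ) ∧ (i:ℕ) < n - 2) := fun h => hs ((hmemWl i).2 h)
        have hin := i.isLt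
        have hi2 : (i:ℕ) = n - 2 ∨ (i:ℕ) = n - 1 := by
          obtain ⟨h1, h2⟩ := hi
          unfold nClass at h1 h2
          rw [huIval] at h1 h2
          split_ifs at h1 h2 <;> omega
        rcases hi2 with h | h
        · left; exact Subtype.ext (congrArg Sum.inl (Fin.ext (by rw [h, hxval])))
        · right; exact Subtype.ext (congrArg Sum.inl (Fin.ext (by rw [h, huIval])))
      · exact absurd ((hindAdj _ _).1 hadj) (Ngraph1_not_adj_rr n p uI j)
  refine ⟨?_, W, hcard1, hcard2, x, x, hxW, hyW,
    fun j _ => hfull1 j, fun i _ => hfull2 i, hnoham⟩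
  intro htp
  obtain ⟨w, hw⟩ := htp W hcard1 hcard2 (Sum.inl x) (by simp) (Sum.inr x) (by simp)
    hxW hyW
  exact hnoham ⟨w, hw⟩
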